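/- Biorthogonality: with L, μ, Δ, ℘ as above and a path ℓ : ℕ → ℤ (ℓ_0 = 0, increments in {0,1}), define the monic polynomials π_n(x) = ℘_n^{ℓ_n}(x)/Δ_n^{ℓ_n} and the Laurent polynomials ρ_n(x) = ((−1)^n/Δ_n^{ℓ_n})·x^{ℓ_{n+1}−n}·℘_n^{ℓ_{n+1}−1}(x), assuming all Δ_k^{ℓ_k} ≠ 0. Then L(ρ_m(z)·π_n(z)) = δ_{mn}·h_n where h_n = Δ_{n+1}^{ℓ_{n+1}}/Δ_n^{ℓ_n}. -/
import Mathlib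


/-- Shifted Toeplitz determinant `Δ_n^ℓ = det [μ(ℓ + j − i)]_{i,j = 1..n}`, with `Δ_0^ℓ = 1`. -/
noncomputable def Delta {F : Type*} [Field F] (μ : ℤ → F) (n : ℕ) (ℓ : ℤ) : F :=
  (Matrix.of fun i j : Fin n => μ (ℓ + (j : ℤ) - (i : ℤ))).det

/-- Bordered shifted Toeplitz determinant `℘_n^ℓ(x)`: the (n+1)×(n+1) determinant whose
rows `i = 1..n` are `(μ_{ℓ−i+1}, …, μ_{ℓ−i+1+n})` and whose last row is `(1, x, …, xⁿ)`. -/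
noncomputable def wp {F : Type*} [Field F] (μ : ℤ → F) (n : ℕ) (ℓ : ℤ) : Polynomial F :=
  (Matrix.of fun i j : Fin (n + 1) =>
    if (i : ℕ) < n then Polynomial.C (μ (ℓ - (i : ℤ) + (j : ℤ))) else Polynomial.X ^ (j : ℕ)).det

/-- The moments of a linear functional on Laurent polynomials. -/
noncomputable def mom {F : Type*} [Field F] (L : LaurentPolynomial F →ₗ[F] F) : ℤ → F :=
  fun k => L (LaurentPolynomial.T k)

namespace Bio

open LaurentPolynomial Polynomial Matrix

variable {F : Type*} [Field F]

/-- Full scalar Toeplitz-type matrix. -/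
noncomputable def Tmat (μ : ℤ → F) (n : ℕ) (ℓ : ℤ) : Matrix (Fin (n+1)) (Fin (n+1)) F :=
  Matrix.of fun i j => μ (ℓ - (i : ℤ) + (j : ℤ))

/-- Cofactor of the last row. -/
noncomputable def cof (μ : ℤ → F) (n : ℕ) (ℓ : ℤ) (j : Fin (n+1)) : F :=
  (-1 : F) ^ (n + (j : ℕ)) * ((Tmat μ n ℓ).submatrix Fin.castSucc j.succAbove).det

/-- Bordered matrix with last row `μ (s + j)`. -/
noncomputable def Bmat (μ : ℤ → F) (n : ℕ) (ℓ s : ℤ) : Matrix (Fin (n+1)) (Fin (n+1)) F :=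
  Matrix.of fun i j => if (i : ℕ) < n then μ (ℓ - (i : ℤ) + (j : ℤ)) else μ (s + (j : ℤ))

theorem wp_expand (μ : ℤ → F) (n : ℕ) (ℓ : ℤ) :
    wp μ n ℓ = ∑ j : Fin (n+1), Polynomial.C (cof μ n ℓ j) * Polynomial.X ^ (j : ℕ) := by
  rw [wp, Matrix.det_succ_row _ (Fin.last n)]
  refine Finset.sum_congr rfl fun j _ => ?_
  have h1 : ((Matrix.of fun i j : Fin (n + 1) =>
      if (i : ℕ) < n then Polynomial.C (μ (ℓ - (i : ℤ) + (j : ℤ))) else Polynomial.X ^ (j : ℕ)).submatrix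
      (Fin.last n).succAbove j.succAbove)
      = ((Tmat μ n ℓ).submatrix Fin.castSucc j.succAbove).map Polynomial.C := by
    ext i k
    simp [Fin.succAbove_last, Tmat, Matrix.submatrix, (Fin.castSucc i).isLt]
  have h3 : (((Tmat μ n ℓ).submatrix Fin.castSucc j.succAbove).map ⇑Polynomial.C).det
      = Polynomial.C ((Tmat μ n ℓ).submatrix Fin.castSucc j.succAbove).det :=
    (RingHom.map_det Polynomial.C _).symm
  have h2 : (Matrix.of fun i j : Fin (n + 1) =>
      if (i : ℕ) < n then Polynomial.C (μ (ℓ - (i : ℤ) + (j : ℤ))) else Polynomial.X ^ (j : ℕ))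
      (Fin.last n) j = Polynomial.X ^ (j : ℕ) := by simp
  rw [h1, h3, h2, cof, Fin.val_last, _root_.map_mul, map_pow, map_neg, Polynomial.C_1]
  ring

theorem Bmat_expand (μ : ℤ → F) (n : ℕ) (ℓ s : ℤ) :
    (Bmat μ n ℓ s).det = ∑ j : Fin (n+1), cof μ n ℓ j * μ (s + (j : ℤ)) := by
  rw [Matrix.det_succ_row _ (Fin.last n)]
  refine Finset.sum_congr rfl fun j _ => ?_
  have h1 : ((Bmat μ n ℓ s).submatrix (Fin.last n).succAbove j.succAbove)
      = (Tmat μ n ℓ).submatrix Fin.castSucc j.succAbove := by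
    ext i k
    simp [Fin.succAbove_last, Bmat, Tmat, Matrix.submatrix, (Fin.castSucc i).isLt]
  have h2 : Bmat μ n ℓ s (Fin.last n) j = μ (s + (j : ℤ)) := by simp [Bmat]
  rw [h1, h2, cof, Fin.val_last]
  ring


theorem cof_last (μ : ℤ → F) (n : ℕ) (ℓ : ℤ) : cof μ n ℓ (Fin.last n) = Delta μ n ℓ := by
  have h1 : (Tmat μ n ℓ).submatrix Fin.castSucc (Fin.last n).succAbove
      = Matrix.of fun i j : Fin n => μ (ℓ + (j : ℤ) - (i : ℤ)) := by
    ext i j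
    simp only [Fin.succAbove_last, Matrix.submatrix_apply, Tmat, Matrix.of_apply,
      Fin.coe_castSucc]
    congr 1
    ring
  rw [cof, h1, Fin.val_last, ← two_mul, pow_mul, neg_one_sq, one_pow, one_mul, Delta]

theorem L_expand (L : LaurentPolynomial F →ₗ[F] F) (s : ℤ) (m : ℕ) (ℓ' : ℤ)
    (q : LaurentPolynomial F) :
    L (LaurentPolynomial.T s * Polynomial.toLaurent (wp (mom L) m ℓ') * q)
      = ∑ k : Fin (m+1), cof (mom L) m ℓ' k * L (LaurentPolynomial.T (s + (k : ℤ)) * q) := by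
  rw [wp_expand, map_sum, Finset.mul_sum, Finset.sum_mul, map_sum]
  refine Finset.sum_congr rfl fun k _ => ?_
  have h1 : LaurentPolynomial.T s * Polynomial.toLaurent
        (Polynomial.C (cof (mom L) m ℓ' k) * Polynomial.X ^ (k : ℕ)) * q
      = cof (mom L) m ℓ' k • (LaurentPolynomial.T (s + (k : ℤ)) * q) := by
    rw [Polynomial.toLaurent_C_mul_X_pow, LaurentPolynomial.T_add, Algebra.smul_def,
      ← LaurentPolynomial.C_eq_algebraMap]
    ring
  rw [h1, L.map_smul, smul_eq_mul]

theorem Lval (L : LaurentPolynomial F →ₗ[F] F) (s : ℤ) (n : ℕ) (ℓ : ℤ) :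
    L (LaurentPolynomial.T s * Polynomial.toLaurent (wp (mom L) n ℓ))
      = (Bmat (mom L) n ℓ s).det := by
  have := L_expand L s n ℓ 1
  rw [mul_one] at this
  rw [this, Bmat_expand]
  refine Finset.sum_congr rfl fun k _ => ?_
  rw [mul_one]
  rfl

theorem Bmat_det_zero (μ : ℤ → F) (n : ℕ) (ℓ : ℤ) (s : ℤ) (h1 : ℓ - n < s) (h2 : s ≤ ℓ) :
    (Bmat μ n ℓ s).det = 0 := by
  set t : ℕ := (ℓ - s).toNat with ht
  have htv : (t : ℤ) = ℓ - s := Int.toNat_of_nonneg (by omega)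
  have htn : t < n := by omega
  refine Matrix.det_zero_of_row_eq (M := Bmat μ n ℓ s)
    (i := ⟨t, by omega⟩) (j := Fin.last n) ?_ ?_
  · intro h
    have := congrArg Fin.val h
    simp only [Fin.val_last] at this
    omega
  · funext j
    simp only [Bmat, Matrix.of_apply, htn, if_true, Fin.val_last, lt_irrefl, if_false]
    congr 1
    omega

theorem Bmat_det_top (μ : ℤ → F) (n : ℕ) (ℓ : ℤ) :
    (Bmat μ n ℓ (ℓ + 1)).det = (-1 : F) ^ n * Delta μ (n + 1) (ℓ + 1) := by
  have hB : Bmat μ n ℓ (ℓ + 1)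
      = (Matrix.of fun i j : Fin (n+1) => μ (ℓ + 1 + (j : ℤ) - (i : ℤ))).submatrix
          (finRotate (n+1)) id := by
    ext i j
    simp only [Bmat, Matrix.of_apply, Matrix.submatrix_apply, id]
    by_cases hi : (i : ℕ) < n
    · have hne : i ≠ Fin.last n := by
        intro h; rw [h, Fin.val_last] at hi; omega
      rw [if_pos hi, coe_finRotate_of_ne_last hne]
      congr 1
      push_cast
      ring
    · have hlast : i = Fin.last n := by
        ext; simp only [Fin.val_last]; omega
      rw [if_neg hi, hlast, finRotate_last]
      congr 1
      simp
  rw [hB, Matrix.det_permute, sign_finRotate, Delta]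
  norm_cast

theorem path_mono (ℓ : ℕ → ℤ) (hinc : ∀ k, ℓ (k + 1) = ℓ k ∨ ℓ (k + 1) = ℓ k + 1) :
    ∀ d a : ℕ, ℓ a ≤ ℓ (a + d) ∧ ℓ (a + d) ≤ ℓ a + d := by
  intro d
  induction d with
  | zero => intro a; simp
  | succ d ih =>
    intro a
    have h1 := ih a
    have h2 := hinc (a + d)
    have : a + (d + 1) = (a + d) + 1 := by omega
    rw [this]
    push_cast
    omega

end Bio

/-- Biorthogonality: with `π_n(x) = ℘_n^{ℓ_n}(x)/Δ_n^{ℓ_n}` and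
`ρ_m(x) = ((−1)^m/Δ_m^{ℓ_m})·x^{ℓ_{m+1}−m}·℘_m^{ℓ_{m+1}−1}(x)`, one has
`L(ρ_m·π_n) = δ_{mn}·h_n` with `h_n = Δ_{n+1}^{ℓ_{n+1}}/Δ_n^{ℓ_n}`, provided all
`Δ_k^{ℓ_k} ≠ 0` along the path. -/
theorem biorthogonality {F : Type*} [Field F] (L : LaurentPolynomial F →ₗ[F] F)
    (ℓ : ℕ → ℤ) (h0 : ℓ 0 = 0)
    (hinc : ∀ k, ℓ (k + 1) = ℓ k ∨ ℓ (k + 1) = ℓ k + 1)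
    (hΔ : ∀ k, Delta (mom L) k (ℓ k) ≠ 0) (m n : ℕ) :
    L ((((-1 : F) ^ m / Delta (mom L) m (ℓ m)) •
          (LaurentPolynomial.T (ℓ (m + 1) - (m : ℤ)) *
            Polynomial.toLaurent (wp (mom L) m (ℓ (m + 1) - 1)))) *
        ((Delta (mom L) n (ℓ n))⁻¹ • Polynomial.toLaurent (wp (mom L) n (ℓ n)))) =
      if m = n then Delta (mom L) (n + 1) (ℓ (n + 1)) / Delta (mom L) n (ℓ n) else 0 := by
  classical
  have hmono := Bio.path_mono ℓ hinc
  rw [smul_mul_smul_comm, L.map_smul, smul_eq_mul, mul_assoc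
      (LaurentPolynomial.T (ℓ (m + 1) - (m : ℤ)))]
  rw [← mul_assoc (LaurentPolynomial.T (ℓ (m + 1) - (m : ℤ)))]
  have key : L (LaurentPolynomial.T (ℓ (m + 1) - (m : ℤ)) *
        Polynomial.toLaurent (wp (mom L) m (ℓ (m + 1) - 1)) *
        Polynomial.toLaurent (wp (mom L) n (ℓ n)))
      = if m = n then
          Delta (mom L) n (ℓ n) * ((-1 : F) ^ n * Delta (mom L) (n + 1) (ℓ (n + 1)))
        else 0 := by
    rcases lt_trichotomy m n with hlt | heq | hgt
    · rw [if_neg hlt.ne, Bio.L_expand]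
      refine Finset.sum_eq_zero fun k _ => ?_
      have hk : (k : ℕ) ≤ m := Nat.le_of_lt_succ k.isLt
      have hub := (hmono (n - (m + 1)) (m + 1)).2
      have hlb := (hmono (n - (m + 1)) (m + 1)).1
      have hEq : m + 1 + (n - (m + 1)) = n := by omega
      rw [hEq] at hub hlb
      have hd : ((n - (m + 1) : ℕ) : ℤ) = (n : ℤ) - (m : ℤ) - 1 := by push_cast; omega
      rw [hd] at hub
      have h1 : (ℓ n) - (n : ℤ) < ℓ (m + 1) - (m : ℤ) + (k : ℤ) := by
        have : (0 : ℤ) ≤ (k : ℤ) := Int.natCast_nonneg _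
        omega
      have h2 : ℓ (m + 1) - (m : ℤ) + (k : ℤ) ≤ ℓ n := by
        have : (k : ℤ) ≤ (m : ℤ) := by exact_mod_cast hk
        omega
      rw [Bio.Lval, Bio.Bmat_det_zero (mom L) n (ℓ n) _ h1 h2, mul_zero]
    · subst heq
      rw [if_pos rfl]
      have hcomm : LaurentPolynomial.T (ℓ (m + 1) - (m : ℤ)) *
            Polynomial.toLaurent (wp (mom L) m (ℓ (m + 1) - 1)) *
            Polynomial.toLaurent (wp (mom L) m (ℓ m))
          = LaurentPolynomial.T (ℓ (m + 1) - (m : ℤ)) *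
            Polynomial.toLaurent (wp (mom L) m (ℓ m)) *
            Polynomial.toLaurent (wp (mom L) m (ℓ (m + 1) - 1)) := by ring
      rw [hcomm, Bio.L_expand, Fin.sum_univ_castSucc]
      have hzero : ∀ k : Fin m, Bio.cof (mom L) m (ℓ m) (Fin.castSucc k) *
          L (LaurentPolynomial.T (ℓ (m + 1) - (m : ℤ) + ((Fin.castSucc k : Fin (m+1)) : ℤ)) *
            Polynomial.toLaurent (wp (mom L) m (ℓ (m + 1) - 1))) = 0 := by
        intro k
        have hk : (k : ℕ) < m := k.isLt
        have h1 : (ℓ (m + 1) - 1) - (m : ℤ) <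
            ℓ (m + 1) - (m : ℤ) + ((Fin.castSucc k : Fin (m+1)) : ℤ) := by
          have : (0 : ℤ) ≤ ((Fin.castSucc k : Fin (m+1)) : ℤ) := Int.natCast_nonneg _
          omega
        have h2 : ℓ (m + 1) - (m : ℤ) + ((Fin.castSucc k : Fin (m+1)) : ℤ) ≤ ℓ (m + 1) - 1 := by
          have : ((Fin.castSucc k : Fin (m+1)) : ℤ) < (m : ℤ) := by
            simp only [Fin.coe_castSucc]
            exact_mod_cast hk
          omega
        rw [Bio.Lval, Bio.Bmat_det_zero (mom L) m (ℓ (m+1) - 1) _ h1 h2, mul_zero]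
      rw [Finset.sum_eq_zero (fun k _ => hzero k), zero_add]
      have hlast : ℓ (m + 1) - (m : ℤ) + ((Fin.last m : Fin (m+1)) : ℤ) = (ℓ (m + 1) - 1) + 1 := by
        simp only [Fin.val_last]
        omega
      rw [Bio.Lval, hlast, Bio.Bmat_det_top, Bio.cof_last]
      have : ℓ (m + 1) - 1 + 1 = ℓ (m + 1) := by omega
      rw [this]
    · rw [if_neg (by omega : ¬ m = n)]
      have hcomm : LaurentPolynomial.T (ℓ (m + 1) - (m : ℤ)) *
            Polynomial.toLaurent (wp (mom L) m (ℓ (m + 1) - 1)) *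
            Polynomial.toLaurent (wp (mom L) n (ℓ n))
          = LaurentPolynomial.T (ℓ (m + 1) - (m : ℤ)) *
            Polynomial.toLaurent (wp (mom L) n (ℓ n)) *
            Polynomial.toLaurent (wp (mom L) m (ℓ (m + 1) - 1)) := by ring
      rw [hcomm, Bio.L_expand]
      refine Finset.sum_eq_zero fun k _ => ?_
      have hk : (k : ℕ) ≤ n := Nat.le_of_lt_succ k.isLt
      have h1 : (ℓ (m + 1) - 1) - (m : ℤ) < ℓ (m + 1) - (m : ℤ) + (k : ℤ) := by
        have : (0 : ℤ) ≤ (k : ℤ) := Int.natCast_nonneg _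
        omega
      have h2 : ℓ (m + 1) - (m : ℤ) + (k : ℤ) ≤ ℓ (m + 1) - 1 := by
        have hk' : (k : ℤ) ≤ (n : ℤ) := by exact_mod_cast hk
        have : (n : ℤ) < (m : ℤ) := by exact_mod_cast hgt
        omega
      rw [Bio.Lval, Bio.Bmat_det_zero (mom L) m (ℓ (m+1) - 1) _ h1 h2, mul_zero]
  rw [key]
  by_cases hmn : m = n
  · subst hmn
    rw [if_pos rfl, if_pos rfl]
    have hD := hΔ m
    have hsq : ((-1 : F) ^ m) * ((-1 : F) ^ m) = 1 := by
      rw [← pow_add]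
      exact Even.neg_one_pow ⟨m, rfl⟩
    field_simp
    ring_nf
    rw [mul_comm m 2, pow_mul, neg_one_sq, one_pow, mul_one]
  · rw [if_neg hmn, if_neg hmn, mul_zero]
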